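/- The union over all S_d-orbits X of the images σ_X((Z/nZ)^d) is invariant under rotation by the angle 2π·gcd(n,d)/n, hence has n/gcd(n,d)-fold dihedral symmetry. -/

import Mathlib

open Finset

/-- `e n z` = exp(2πi·z/n) for `z : ZMod n`. -/
noncomputable def e (n : ℕ) (z : ZMod n) : ℂ :=
  Complex.exp (2 * Real.pi * Complex.I * z.val / n)

/-- Dot product on `(ZMod n)^d`. -/
def dot {n d : ℕ} (x y : Fin d → ZMod n) : ZMod n := ∑ i, x i * y i

/-- The orbit `S_d · x` of `x` under coordinate permutation, as a `Finset`. -/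
noncomputable def orbit (n d : ℕ) (x : Fin d → ZMod n) : Finset (Fin d → ZMod n) :=
  Finset.image (fun π : Equiv.Perm (Fin d) => x ∘ π) Finset.univ

/-- The symmetric supercharacter attached to the orbit of `x`. -/
noncomputable def σ (n d : ℕ) (x y : Fin d → ZMod n) : ℂ :=
  ∑ v ∈ orbit n d x, e n (dot v y)

noncomputable def E (n : ℕ) : ℂ := Complex.exp (2 * Real.pi * Complex.I / n)

lemma E_pow (n : ℕ) (k : ℕ) : E n ^ k = Complex.exp (2 * Real.pi * Complex.I * k / n) := by
  rw [E, ← Complex.exp_nat_mul]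
  ring_nf

lemma E_pow_n (n : ℕ) (hn : 0 < n) : E n ^ n = 1 := by
  rw [E_pow]
  have hn' : (n:ℂ) ≠ 0 := Nat.cast_ne_zero.mpr hn.ne'
  have : (2 * Real.pi * Complex.I * n / n : ℂ) = 2 * Real.pi * Complex.I := by
    rw [mul_div_assoc, div_self hn', mul_one]
  rw [this, Complex.exp_two_pi_mul_I]

lemma e_eq (n : ℕ) (z : ZMod n) : e n z = E n ^ z.val := by rw [E_pow, e]

lemma E_pow_mod (n : ℕ) (hn : 0 < n) (k : ℕ) : E n ^ (k % n) = E n ^ k := by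
  conv_rhs => rw [← Nat.mod_add_div k n, pow_add, pow_mul, E_pow_n n hn, one_pow, mul_one]

lemma e_natCast (n : ℕ) (hn : 0 < n) (k : ℕ) : e n ((k : ZMod n)) = E n ^ k := by
  haveI : NeZero n := ⟨hn.ne'⟩
  rw [e_eq, ZMod.val_natCast, E_pow_mod n hn]

lemma e_add (n : ℕ) (hn : 0 < n) (z w : ZMod n) : e n (z + w) = e n z * e n w := by
  haveI : NeZero n := ⟨hn.ne'⟩
  have h1 : z + w = (((z.val + w.val : ℕ)) : ZMod n) := by
    push_cast
    rw [ZMod.natCast_val, ZMod.natCast_val, ZMod.cast_id, ZMod.cast_id]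
  rw [h1, e_natCast n hn, pow_add, ← e_eq, ← e_eq]

lemma e_zero (n : ℕ) (hn : 0 < n) : e n 0 = 1 := by
  haveI : NeZero n := ⟨hn.ne'⟩
  rw [e_eq, ZMod.val_zero, pow_zero]

lemma e_conj (n : ℕ) (hn : 0 < n) (z : ZMod n) : (starRingEnd ℂ) (e n z) = e n (-z) := by
  have h1 : e n z * e n (-z) = 1 := by rw [← e_add n hn, add_neg_cancel, e_zero n hn]
  have h2 : (starRingEnd ℂ) (e n z) = (e n z)⁻¹ := by
    rw [e, ← Complex.exp_conj, ← Complex.exp_neg]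
    congr 1
    simp [map_div₀, Complex.conj_I, map_ofNat]
    ring
  have h3 : e n (-z) = (e n z)⁻¹ :=
    eq_inv_of_mul_eq_one_right (by linear_combination h1)
  rw [h2, h3]

lemma sum_of_mem_orbit {n d : ℕ} {x v : Fin d → ZMod n} (h : v ∈ orbit n d x) :
    ∑ i, v i = ∑ i, x i := by
  rw [orbit, Finset.mem_image] at h
  obtain ⟨π, -, rfl⟩ := h
  exact Equiv.sum_comp π x

lemma orbit_shift (n d : ℕ) (x : Fin d → ZMod n) (a : ZMod n) :
    orbit n d (fun i => x i + a) = (orbit n d x).image (fun v => fun i => v i + a) := by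
  rw [orbit, orbit, Finset.image_image]
  rfl

lemma sigma_shift (n d : ℕ) (hn : 0 < n) (x y : Fin d → ZMod n) (a b : ZMod n) :
    σ n d (fun i => x i + a) (fun i => y i + b) =
      e n (a * ∑ i, y i + b * ∑ i, x i + a * b * (d : ZMod n)) * σ n d x y := by
  rw [σ, σ, orbit_shift]
  rw [Finset.sum_image (by
    intro v₁ _ v₂ _ heq
    funext i
    have := congrFun heq i
    simpa using this)]
  rw [Finset.mul_sum]
  refine Finset.sum_congr rfl fun v hv => ?_
  have hdot : dot (fun i => v i + a) (fun i => y i + b)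
      = dot v y + (a * ∑ i, y i + b * ∑ i, x i + a * b * (d : ZMod n)) := by
    rw [dot, dot]
    have hsum : ∑ i, v i = ∑ i, x i := sum_of_mem_orbit hv
    have : ∀ i, (v i + a) * (y i + b) = v i * y i + (a * y i + b * v i + a * b) := by
      intro i; ring
    rw [Finset.sum_congr rfl fun i _ => this i]
    rw [Finset.sum_add_distrib, Finset.sum_add_distrib, Finset.sum_add_distrib,
      ← Finset.mul_sum, ← Finset.mul_sum, hsum, Finset.sum_const, Finset.card_univ,
      Fintype.card_fin, nsmul_eq_mul]
    ring
  rw [hdot, e_add n hn, mul_comm]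

lemma sigma_conj (n d : ℕ) (hn : 0 < n) (x y : Fin d → ZMod n) :
    σ n d x (fun i => - y i) = (starRingEnd ℂ) (σ n d x y) := by
  rw [σ, σ, map_sum]
  refine Finset.sum_congr rfl fun v _ => ?_
  rw [e_conj n hn]
  congr 1
  rw [dot, dot, ← Finset.sum_neg_distrib]
  exact Finset.sum_congr rfl fun i _ => by ring


lemma keyPP (p : ℕ) (hp : p.Prime) (e : ℕ) : ∀ (d s t G : ℤ),
    ((Int.gcd ((p:ℤ)^e) d : ℤ) ∣ G) →
    ∃ a b : ℤ, ((p:ℤ)^e) ∣ a*t + b*s + a*b*d - G := by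
  have hpI : Prime (p:ℤ) := by rw [Int.prime_iff_natAbs_prime]; simpa using hp
  induction e with
  | zero => intro d s t G _; exact ⟨0, 0, by simpa using one_dvd _⟩
  | succ e ih =>
    intro d s t G hG
    by_cases ht : (p:ℤ) ∣ t
    · by_cases hs : (p:ℤ) ∣ s
      · by_cases hd : (p:ℤ) ∣ d
        · -- descent
          obtain ⟨t', rfl⟩ := ht
          obtain ⟨s', rfl⟩ := hs
          obtain ⟨d', rfl⟩ := hd
          have hpG : (p:ℤ) ∣ G := by
            refine dvd_trans ?_ hG
            exact dvd_trans (Int.dvd_coe_gcd (dvd_pow_self _ (Nat.succ_ne_zero e)) ⟨d', rfl⟩) dvd_rfl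
          obtain ⟨G', rfl⟩ := hpG
          have hp0 : (p:ℤ) ≠ 0 := by exact_mod_cast hp.ne_zero
          have hcond : (Int.gcd ((p:ℤ)^e) d' : ℤ) ∣ G' := by
            have h1 : (p:ℤ) * (Int.gcd ((p:ℤ)^e) d' : ℤ) ∣ (p:ℤ) * G' := by
              refine dvd_trans ?_ hG
              refine Int.dvd_coe_gcd ?_ ?_
              · rw [pow_succ']
                exact mul_dvd_mul_left _ (Int.gcd_dvd_left _ _)
              · exact mul_dvd_mul_left _ (Int.gcd_dvd_right _ _)
            exact (mul_dvd_mul_iff_left hp0).mp h1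
          obtain ⟨a, b, k, hk⟩ := ih d' s' t' G' hcond
          refine ⟨a, b, k, ?_⟩
          rw [pow_succ]
          linear_combination (p:ℤ) * hk
        · -- p ∤ d, p ∣ s, p ∣ t : use b = 1
          have hco : IsCoprime ((p:ℤ)^(e+1)) (t + d) := by
            refine IsCoprime.pow_left ?_
            refine (Prime.coprime_iff_not_dvd hpI).mpr ?_
            intro h
            exact hd (by simpa using dvd_sub h ht)
          obtain ⟨u, v, huv⟩ := hco
          refine ⟨v*(G - s), 1, -(G-s)*u, ?_⟩
          linear_combination (G - s) * huv
      · -- p ∤ s : a = 0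
        have hco : IsCoprime ((p:ℤ)^(e+1)) s :=
          IsCoprime.pow_left ((Prime.coprime_iff_not_dvd hpI).mpr hs)
        obtain ⟨u, v, huv⟩ := hco
        refine ⟨0, v*G, -G*u, ?_⟩
        linear_combination G * huv
    · -- p ∤ t : b = 0
      have hco : IsCoprime ((p:ℤ)^(e+1)) t :=
        IsCoprime.pow_left ((Prime.coprime_iff_not_dvd hpI).mpr ht)
      obtain ⟨u, v, huv⟩ := hco
      refine ⟨v*G, 0, -G*u, ?_⟩
      linear_combination G * huv

lemma keyMain : ∀ n : ℕ, 0 < n → ∀ d s t G : ℤ, ((Int.gcd (n:ℤ) d : ℤ) ∣ G) →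
    ∃ a b : ℤ, (n:ℤ) ∣ a*t + b*s + a*b*d - G := by
  intro n
  induction n using Nat.strong_induction_on with
  | _ n IH =>
  intro hn d s t G hG
  rcases eq_or_lt_of_le (Nat.succ_le_of_lt hn) with h1 | h1
  · exact ⟨0, 0, by rw [← h1]; simpa using one_dvd _⟩
  -- n ≥ 2
  have hne1 : n ≠ 1 := by omega
  have hn0 : n ≠ 0 := by omega
  set p := n.minFac with hpdef
  have hp : p.Prime := Nat.minFac_prime hne1
  set e := n.factorization p with hedef
  set m := n / p ^ e with hmdef
  have hmul : p ^ e * m = n := Nat.ordProj_mul_ordCompl_eq_self n p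
  have hpe1 : 1 < p ^ e := by
    have he : 0 < e := hp.factorization_pos_of_dvd hn0 (Nat.minFac_dvd n)
    exact Nat.one_lt_pow he.ne' hp.one_lt
  have hm0 : 0 < m := by
    rcases Nat.eq_zero_or_pos m with h | h
    · rw [h, mul_zero] at hmul; omega
    · exact h
  have hmlt : m < n := by
    calc m < m * p ^ e := by nlinarith
    _ = n := by rw [mul_comm]; exact hmul
  have hcop : Nat.Coprime (p ^ e) m := Nat.Coprime.pow_left _ (Nat.coprime_ordCompl hp hn0)
  -- conditions
  have hc1 : (Int.gcd ((p:ℤ)^e) d : ℤ) ∣ G := by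
    refine dvd_trans (dvd_trans (Int.dvd_coe_gcd ?_ (Int.gcd_dvd_right _ _)) dvd_rfl) hG
    refine dvd_trans (Int.gcd_dvd_left _ _) ?_
    have : ((p:ℤ)^e) = ((p^e : ℕ) : ℤ) := by push_cast; ring
    rw [this]
    exact_mod_cast (Nat.ordProj_dvd n p)
  have hc2 : (Int.gcd (m:ℤ) d : ℤ) ∣ G := by
    refine dvd_trans (Int.dvd_coe_gcd ?_ (Int.gcd_dvd_right _ _)) hG
    refine dvd_trans (Int.gcd_dvd_left _ _) ?_
    exact_mod_cast Nat.div_dvd_of_dvd (Nat.ordProj_dvd n p)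
  obtain ⟨a₁, b₁, h₁⟩ := keyPP p hp e d s t G hc1
  obtain ⟨a₂, b₂, h₂⟩ := IH m hmlt hm0 d s t G hc2
  -- CRT combine
  have hcopZ : IsCoprime ((p:ℤ)^e) (m:ℤ) := by
    have := Nat.isCoprime_iff_coprime.mpr hcop
    push_cast at this ⊢
    exact this
  obtain ⟨u, v, huv⟩ := id hcopZ
  set A : ℤ := a₁*(v*(m:ℤ)) + a₂*(u*((p:ℤ)^e)) with hA
  set B : ℤ := b₁*(v*(m:ℤ)) + b₂*(u*((p:ℤ)^e)) with hB
  refine ⟨A, B, ?_⟩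
  have dvd1 : ((p:ℤ)^e) ∣ A*t + B*s + A*B*d - G := by
    have hA1 : ((p:ℤ)^e) ∣ A - a₁ := ⟨a₂*u - a₁*u, by linear_combination a₁ * huv⟩
    have hB1 : ((p:ℤ)^e) ∣ B - b₁ := ⟨b₂*u - b₁*u, by linear_combination b₁ * huv⟩
    have : A*t + B*s + A*B*d - G =
        (a₁*t + b₁*s + a₁*b₁*d - G) + ((A - a₁)*t + (B - b₁)*s + (A*(B - b₁) + b₁*(A - a₁))*d) := by
      ring
    rw [this]
    exact dvd_add h₁ (dvd_add (dvd_add (hA1.mul_right _) (hB1.mul_right _))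
      ((dvd_add (hB1.mul_left _) (hA1.mul_left _)).mul_right _))
  have dvd2 : ((m:ℤ)) ∣ A*t + B*s + A*B*d - G := by
    have hA2 : ((m:ℤ)) ∣ A - a₂ := ⟨a₁*v - a₂*v, by linear_combination a₂ * huv⟩
    have hB2 : ((m:ℤ)) ∣ B - b₂ := ⟨b₁*v - b₂*v, by linear_combination b₂ * huv⟩
    have : A*t + B*s + A*B*d - G =
        (a₂*t + b₂*s + a₂*b₂*d - G) + ((A - a₂)*t + (B - b₂)*s + (A*(B - b₂) + b₂*(A - a₂))*d) := by
      ring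
    rw [this]
    exact dvd_add h₂ (dvd_add (dvd_add (hA2.mul_right _) (hB2.mul_right _))
      ((dvd_add (hB2.mul_left _) (hA2.mul_left _)).mul_right _))
  have := hcopZ.mul_dvd dvd1 dvd2
  have hcast : ((p:ℤ)^e) * (m:ℤ) = (n:ℤ) := by exact_mod_cast congrArg (Nat.cast : ℕ → ℤ) hmul
  rwa [hcast] at this


theorem stmt_10 (n d : ℕ) (hn : 0 < n) (hd : 0 < d) :
    (∀ (x y : Fin d → ZMod n), ∃ x' y' : Fin d → ZMod n,
        σ n d x' y' =
          Complex.exp (2 * Real.pi * Complex.I * (Nat.gcd n d) / n) * σ n d x y) ∧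
      (∀ (x y : Fin d → ZMod n), ∃ x' y' : Fin d → ZMod n,
        σ n d x' y' = (starRingEnd ℂ) (σ n d x y)) := by
  haveI : NeZero n := ⟨hn.ne'⟩
  constructor
  · intro x y
    set S : ZMod n := ∑ i, x i with hS
    set T : ZMod n := ∑ i, y i with hT
    obtain ⟨a, b, hdvd⟩ := keyMain n hn (d : ℤ) ((S.val : ℤ)) ((T.val : ℤ))
      ((Nat.gcd n d : ℤ)) (by rw [Int.gcd_natCast_natCast])
    refine ⟨fun i => x i + (a : ZMod n), fun i => y i + (b : ZMod n), ?_⟩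
    rw [sigma_shift n d hn x y]
    congr 1
    have hz : ((a * (T.val : ℤ) + b * (S.val : ℤ) + a * b * (d : ℤ)
        - (Nat.gcd n d : ℤ) : ℤ) : ZMod n) = 0 :=
      (ZMod.intCast_zmod_eq_zero_iff_dvd _ n).mpr hdvd
    push_cast at hz
    rw [ZMod.natCast_val, ZMod.natCast_val, ZMod.cast_id, ZMod.cast_id] at hz
    have harg : (a : ZMod n) * T + (b : ZMod n) * S + (a : ZMod n) * (b : ZMod n) * (d : ZMod n)
        = ((Nat.gcd n d : ℕ) : ZMod n) := by
      have := sub_eq_zero.mp hz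
      push_cast
      linear_combination this
    rw [harg, e_natCast n hn, E_pow]
  · intro x y
    exact ⟨x, fun i => - y i, sigma_conj n d hn x y⟩
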